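/- There exists a real number p₀ with 2.57 < p₀ < 2.58 such that (1/2)·(2^{p₀} − 1)^{1/p₀} = 4^{−1/p₀}·(1 + τ_{p₀})/(1 − τ_{p₀}), where τ_{p₀} ∈ [0,1) is determined by 2(1 − τ_{p₀})^{p₀} = 1 + τ_{p₀}^{p₀}. -/

import Mathlib

open Real Set

/-- If `c^n ≤ x^m` then `c ≤ x^(m/n)`. -/
lemma le_rpow_of_pow_le {x c : ℝ} (hx : 0 ≤ x) (hc : 0 ≤ c) {m n : ℕ} (hn : n ≠ 0)
    (h : c ^ n ≤ x ^ m) : c ≤ x ^ ((m : ℝ) / n) := by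
  have hkey : (x ^ ((m : ℝ) / n)) ^ n = x ^ m := by
    rw [← Real.rpow_natCast (x ^ ((m : ℝ) / n)) n, ← Real.rpow_mul hx,
      div_mul_cancel₀ _ (by exact_mod_cast hn : (n : ℝ) ≠ 0), Real.rpow_natCast]
  rw [← pow_le_pow_iff_left₀ hc (Real.rpow_nonneg hx _) hn, hkey]
  exact h

/-- If `x^m ≤ c^n` then `x^(m/n) ≤ c`. -/
lemma rpow_le_of_pow_le {x c : ℝ} (hx : 0 ≤ x) (hc : 0 ≤ c) {m n : ℕ} (hn : n ≠ 0)
    (h : x ^ m ≤ c ^ n) : x ^ ((m : ℝ) / n) ≤ c := by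
  have hkey : (x ^ ((m : ℝ) / n)) ^ n = x ^ m := by
    rw [← Real.rpow_natCast (x ^ ((m : ℝ) / n)) n, ← Real.rpow_mul hx,
      div_mul_cancel₀ _ (by exact_mod_cast hn : (n : ℝ) ≠ 0), Real.rpow_natCast]
  rw [← pow_le_pow_iff_left₀ (Real.rpow_nonneg hx _) hc hn, hkey]
  exact h

noncomputable def Xf (p : ℝ) : ℝ := (4 * ((2 : ℝ) ^ p - 1)) ^ (1 / p)

noncomputable def tf (p : ℝ) : ℝ := (Xf p - 2) / (Xf p + 2)

noncomputable def ff (p : ℝ) : ℝ := 2 * (1 - tf p) ^ p - 1 - (tf p) ^ p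

lemma two_rpow_ge {p : ℝ} (hp : 2 ≤ p) : (4 : ℝ) ≤ 2 ^ p := by
  have h2 : (2 : ℝ) ^ (2 : ℝ) ≤ 2 ^ p :=
    (Real.rpow_le_rpow_left_iff (by norm_num : (1:ℝ) < 2)).mpr hp
  have h4 : (2 : ℝ) ^ (2 : ℝ) = 4 := by
    rw [show (2:ℝ) = ((2:ℕ):ℝ) by norm_num, Real.rpow_natCast]; norm_num
  linarith [h4 ▸ h2]

lemma Xf_ge_two {p : ℝ} (hp : 2 ≤ p) : 2 ≤ Xf p := by
  have h4 := two_rpow_ge hp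
  have hppos : (0:ℝ) < p := by linarith
  have h2 : (2:ℝ) = ((2:ℝ) ^ p) ^ (1 / p) := by
    rw [← Real.rpow_mul (by norm_num : (0:ℝ) ≤ 2), mul_one_div, div_self hppos.ne',
      Real.rpow_one]
  rw [h2, Xf]
  exact Real.rpow_le_rpow (by positivity) (by linarith) (by positivity)

lemma tf_nonneg {p : ℝ} (hp : 2 ≤ p) : 0 ≤ tf p := by
  have := Xf_ge_two hp
  exact div_nonneg (by linarith) (by linarith)

lemma tf_lt_one {p : ℝ} (hp : 2 ≤ p) : tf p < 1 := by
  have := Xf_ge_two hp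
  rw [tf, div_lt_one (by linarith)]; linarith

lemma Mpos {p : ℝ} (hp : 2 ≤ p) : 0 < 4 * ((2:ℝ) ^ p - 1) := by
  have := two_rpow_ge hp; linarith

lemma ff_cont : ContinuousOn ff (Icc (2.57 : ℝ) 2.58) := by
  intro p hp
  have hp2 : (2:ℝ) ≤ p := by have := hp.1; norm_num at this ⊢; linarith
  have hppos : (0:ℝ) < p := by linarith
  have hM := Mpos hp2
  have hX2 := Xf_ge_two hp2
  have hA : ContinuousAt (fun q : ℝ => (2:ℝ) ^ q) p :=
    continuousAt_const.rpow continuousAt_id (Or.inl (by norm_num))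
  have hMc : ContinuousAt (fun q : ℝ => 4 * ((2:ℝ) ^ q - 1)) p :=
    continuousAt_const.mul (hA.sub continuousAt_const)
  have hXc : ContinuousAt Xf p :=
    hMc.rpow (continuousAt_const.div continuousAt_id hppos.ne') (Or.inl hM.ne')
  have htc : ContinuousAt tf p :=
    (hXc.sub continuousAt_const).div (hXc.add continuousAt_const) (by dsimp; linarith)
  have h1t : ContinuousAt (fun q : ℝ => (1 - tf q) ^ q) p :=
    (continuousAt_const.sub htc).rpow continuousAt_id (Or.inr hppos)
  have htp : ContinuousAt (fun q : ℝ => (tf q) ^ q) p :=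
    htc.rpow continuousAt_id (Or.inr hppos)
  exact (((continuousAt_const.mul h1t).sub continuousAt_const).sub htp).continuousWithinAt

lemma inv257 : 1 / (2.57 : ℝ) = ((100 : ℕ) : ℝ) / ((257 : ℕ) : ℝ) := by norm_num
lemma p257 : (2.57 : ℝ) = ((257 : ℕ) : ℝ) / ((100 : ℕ) : ℝ) := by norm_num
lemma inv258 : 1 / (2.58 : ℝ) = ((50 : ℕ) : ℝ) / ((129 : ℕ) : ℝ) := by norm_num
lemma p258 : (2.58 : ℝ) = ((129 : ℕ) : ℝ) / ((50 : ℕ) : ℝ) := by norm_num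

lemma tf_le_57 : tf 2.57 ≤ 459319 / 2000000 := by
  have hp2 : (2:ℝ) ≤ 2.57 := by norm_num
  have hM := Mpos hp2
  have ha : (2:ℝ) ^ (2.57:ℝ) ≤ 59380943 / 10000000 := by
    rw [p257]
    exact rpow_le_of_pow_le (by norm_num) (by norm_num) (by norm_num) (by rw [show (257:ℕ) = 128 + 129 from rfl, pow_add]; norm_num)
  have hMle : 4 * ((2:ℝ) ^ (2.57:ℝ) - 1) ≤ 49380943 / 2500000 := by linarith
  have hX : Xf 2.57 ≤ 6385017 / 2000000 := by
    rw [Xf, inv257]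
    calc (4 * ((2:ℝ) ^ (2.57:ℝ) - 1)) ^ (((100:ℕ):ℝ) / ((257:ℕ):ℝ))
        ≤ ((49380943 / 2500000 : ℝ)) ^ (((100:ℕ):ℝ) / ((257:ℕ):ℝ)) :=
          Real.rpow_le_rpow hM.le hMle (by positivity)
      _ ≤ 6385017 / 2000000 :=
          rpow_le_of_pow_le (by norm_num) (by norm_num) (by norm_num) (by rw [show (257:ℕ) = 128 + 129 from rfl, pow_add]; norm_num)
  have hX2 := Xf_ge_two hp2
  rw [tf, div_le_iff₀ (by linarith)]
  nlinarith

lemma ff57_pos : 0 < ff 2.57 := by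
  have hp2 : (2:ℝ) ≤ 2.57 := by norm_num
  have ht0 := tf_nonneg hp2
  have ht2 := tf_le_57
  have hL : (5114163 / 10000000 : ℝ) ≤ (1 - tf 2.57) ^ (2.57:ℝ) := by
    calc (5114163 / 10000000 : ℝ)
        ≤ ((1540681 / 2000000 : ℝ)) ^ (2.57:ℝ) := by
          rw [p257]
          exact le_rpow_of_pow_le (by norm_num) (by norm_num) (by norm_num) (by rw [show (257:ℕ) = 128 + 129 from rfl, pow_add]; norm_num)
      _ ≤ (1 - tf 2.57) ^ (2.57:ℝ) :=
          Real.rpow_le_rpow (by norm_num) (by linarith) (by norm_num)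
  have hU : (tf 2.57) ^ (2.57:ℝ) ≤ 57007 / 2500000 := by
    calc (tf 2.57) ^ (2.57:ℝ)
        ≤ ((459319 / 2000000 : ℝ)) ^ (2.57:ℝ) :=
          Real.rpow_le_rpow ht0 ht2 (by norm_num)
      _ ≤ 57007 / 2500000 := by
          rw [p257]
          exact rpow_le_of_pow_le (by norm_num) (by norm_num) (by norm_num) (by rw [show (257:ℕ) = 128 + 129 from rfl, pow_add]; norm_num)
  rw [ff]; linarith

lemma tf_ge_58 : 1145287 / 5000000 ≤ tf 2.58 := by
  have hp2 : (2:ℝ) ≤ 2.58 := by norm_num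
  have hM := Mpos hp2
  have ha : (59793969 / 10000000 : ℝ) ≤ (2:ℝ) ^ (2.58:ℝ) := by
    rw [p258]
    exact le_rpow_of_pow_le (by norm_num) (by norm_num) (by norm_num) (by norm_num)
  have hMge : (49793969 / 2500000 : ℝ) ≤ 4 * ((2:ℝ) ^ (2.58:ℝ) - 1) := by linarith
  have hX : (15942269 / 5000000 : ℝ) ≤ Xf 2.58 := by
    rw [Xf, inv258]
    calc (15942269 / 5000000 : ℝ)
        ≤ ((49793969 / 2500000 : ℝ)) ^ (((50:ℕ):ℝ) / ((129:ℕ):ℝ)) :=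
          le_rpow_of_pow_le (by norm_num) (by norm_num) (by norm_num) (by norm_num)
      _ ≤ (4 * ((2:ℝ) ^ (2.58:ℝ) - 1)) ^ (((50:ℕ):ℝ) / ((129:ℕ):ℝ)) :=
          Real.rpow_le_rpow (by norm_num) hMge (by positivity)
  have hX2 := Xf_ge_two hp2
  rw [tf, le_div_iff₀ (by linarith)]
  nlinarith

lemma ff58_neg : ff 2.58 < 0 := by
  have hp2 : (2:ℝ) ≤ 2.58 := by norm_num
  have ht1 := tf_ge_58
  have ht1' := tf_lt_one hp2
  have hU : (1 - tf 2.58) ^ (2.58:ℝ) ≤ 511113 / 1000000 := by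
    calc (1 - tf 2.58) ^ (2.58:ℝ)
        ≤ ((3854713 / 5000000 : ℝ)) ^ (2.58:ℝ) :=
          Real.rpow_le_rpow (by linarith) (by linarith) (by norm_num)
      _ ≤ 511113 / 1000000 := by
          rw [p258]
          exact rpow_le_of_pow_le (by norm_num) (by norm_num) (by norm_num) (by norm_num)
  have hL : (11159 / 500000 : ℝ) ≤ (tf 2.58) ^ (2.58:ℝ) := by
    calc (11159 / 500000 : ℝ)
        ≤ ((1145287 / 5000000 : ℝ)) ^ (2.58:ℝ) := by
          rw [p258]
          exact le_rpow_of_pow_le (by norm_num) (by norm_num) (by norm_num) (by norm_num)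
      _ ≤ (tf 2.58) ^ (2.58:ℝ) :=
          Real.rpow_le_rpow (by norm_num) ht1 (by norm_num)
  rw [ff]; linarith

/-- there exists `p₀ ∈ (2.57, 2.58)` with
`(1/2)(2^p₀ - 1)^(1/p₀) = 4^(-1/p₀)(1+τ_{p₀})/(1-τ_{p₀})`, where `τ_{p₀} ∈ [0,1)` is
determined by `2(1-τ_{p₀})^{p₀} = 1 + τ_{p₀}^{p₀}`. -/
theorem stmt_5 :
    ∃ p₀ τ : ℝ, 2.57 < p₀ ∧ p₀ < 2.58 ∧ 0 ≤ τ ∧ τ < 1 ∧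
      2 * (1 - τ) ^ p₀ = 1 + τ ^ p₀ ∧
      (1 / 2) * ((2 : ℝ) ^ p₀ - 1) ^ (1 / p₀) =
        (4 : ℝ) ^ (-1 / p₀) * (1 + τ) / (1 - τ) := by
  have hab : (2.57 : ℝ) ≤ 2.58 := by norm_num
  have hivt := intermediate_value_Icc' hab ff_cont
  have h0 : (0 : ℝ) ∈ Icc (ff 2.58) (ff 2.57) := ⟨ff58_neg.le, ff57_pos.le⟩
  obtain ⟨p₀, hp₀, hfp₀⟩ := hivt h0
  have hne1 : p₀ ≠ 2.57 := by
    intro h; rw [h] at hfp₀; exact absurd hfp₀ ff57_pos.ne'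
  have hne2 : p₀ ≠ 2.58 := by
    intro h; rw [h] at hfp₀; exact absurd hfp₀ ff58_neg.ne
  have hlt1 : (2.57 : ℝ) < p₀ := lt_of_le_of_ne hp₀.1 (Ne.symm hne1)
  have hlt2 : p₀ < 2.58 := lt_of_le_of_ne hp₀.2 hne2
  have hp2 : (2:ℝ) ≤ p₀ := by linarith
  have hppos : (0:ℝ) < p₀ := by linarith
  refine ⟨p₀, tf p₀, hlt1, hlt2, tf_nonneg hp2, tf_lt_one hp2, ?_, ?_⟩
  · rw [ff] at hfp₀; linarith
  · -- crossing equation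
    have h4 := two_rpow_ge hp2
    have hB0 : (0:ℝ) ≤ (2:ℝ) ^ p₀ - 1 := by linarith
    have hXeq : Xf p₀ = (4:ℝ) ^ (1/p₀) * ((2:ℝ) ^ p₀ - 1) ^ (1/p₀) := by
      rw [Xf, Real.mul_rpow (by norm_num) hB0]
    have hX2 := Xf_ge_two hp2
    have hc : (0:ℝ) < (4:ℝ) ^ (1/p₀) := Real.rpow_pos_of_pos (by norm_num) _
    have hcinv : (4:ℝ) ^ (-1/p₀) = ((4:ℝ) ^ (1/p₀))⁻¹ := by
      rw [show (-1/p₀ : ℝ) = -(1/p₀) by ring, Real.rpow_neg (by norm_num)]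
    set c := (4:ℝ) ^ (1/p₀)
    set B := ((2:ℝ) ^ p₀ - 1) ^ (1/p₀)
    have hXcB : Xf p₀ = c * B := hXeq
    rw [tf, hcinv, hXcB]
    have hden : c * B + 2 ≠ 0 := by rw [← hXcB]; linarith
    rw [mul_div_assoc, one_add_div hden, one_sub_div hden, div_div_div_cancel_right₀ hden,
      show c * B + 2 - (c * B - 2) = 4 by ring,
      show c⁻¹ * ((c * B + 2 + (c * B - 2)) / 4) = (c⁻¹ * c) * B / 2 by ring,
      inv_mul_cancel₀ hc.ne']
    ring
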